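/- arXiv:1304.5924 — 6 statements merged into one kernel-verified Lean document; each statement's English description precedes it below -/
import Mathlib

section
/- Let σ^k_n be defined by σ^0_n = 1 for all n ≥ 1, σ^k_{n+1} = Σ_{i=0}^{k} σ^i_n (mod 2) for 1 ≤ k ≤ n-1, and σ^n_{n+1} = σ^{n-1}_{n+1}. Then σ^k_n ≡ C(n+k, k) (mod 2) for all n ≥ 1 and 0 ≤ k ≤ n-1. -/
lemma hsN (n k : ℕ) : ∑ i ∈ Finset.range (k+1), (n+i).choose i = (n+k+1).choose k := by
  induction k with
  | zero => simp
  | succ k ih =>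
    rw [Finset.sum_range_succ, ih]
    have e : n + (k+1) + 1 = (n+k+1) + 1 := by ring
    rw [e, Nat.choose_succ_succ]
    rfl

lemma hsZ (n k : ℕ) :
    ∑ i ∈ Finset.range (k+1), ((n+i).choose i : ZMod 2) = ((n+k+1).choose k : ZMod 2) := by
  rw [← Nat.cast_sum, hsN]

lemma centralEven (m : ℕ) : (((2*m+2).choose (m+1) : ℕ) : ZMod 2) = 0 := by
  have h1 : (2*m+2).choose (m+1) = (2*m+1).choose m + (2*m+1).choose (m+1) := by
    have e : 2*m+2 = (2*m+1)+1 := by ring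
    rw [e, Nat.choose_succ_succ]
  have h2 : (2*m+1).choose (m+1) = (2*m+1).choose m := by
    have h := Nat.choose_symm (n := 2*m+1) (k := m+1) (by omega)
    simpa [show 2*m+1-(m+1) = m by omega] using h.symm
  rw [h1, h2]
  push_cast
  exact CharTwo.add_self_eq_zero _

/-- If `σ k n` (written `σ n k` here, values in `ZMod 2`) satisfies
`σ n 0 = 1` for `n ≥ 1`, the recurrence `σ (n+1) k = ∑_{i=0}^k σ n i` for `1 ≤ k ≤ n-1`,
and `σ (n+1) n = σ (n+1) (n-1)`, then `σ n k ≡ C(n+k, k) (mod 2)` for all `n ≥ 1`, `k ≤ n-1`. -/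
theorem stmt0 (σ : ℕ → ℕ → ZMod 2)
    (h0 : ∀ n, 1 ≤ n → σ n 0 = 1)
    (hrec : ∀ n, 1 ≤ n → ∀ k, 1 ≤ k → k ≤ n - 1 →
      σ (n + 1) k = ∑ i ∈ Finset.range (k + 1), σ n i)
    (htop : ∀ n, 1 ≤ n → σ (n + 1) n = σ (n + 1) (n - 1)) :
    ∀ n, 1 ≤ n → ∀ k, k ≤ n - 1 → σ n k = (Nat.choose (n + k) k : ZMod 2) := by
  intro n
  induction n with
  | zero => intro h; exact absurd h (by omega)
  | succ n ih =>
    intro _ k hk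
    rcases Nat.eq_zero_or_pos n with rfl | hn
    · have hk0 : k = 0 := by omega
      subst hk0
      simpa using h0 1 le_rfl
    · obtain ⟨m, rfl⟩ : ∃ m, n = m + 1 := ⟨n-1, by omega⟩
      have ihm := ih (by omega)
      rcases Nat.eq_zero_or_pos k with rfl | hkpos
      · simpa using h0 (m+2) (by omega)
      · rcases lt_or_eq_of_le hk with hklt | hkeq
        · have hkm : k ≤ m := by omega
          rw [hrec (m+1) (by omega) k hkpos (by omega)]
          have hc : ∀ i ∈ Finset.range (k+1), σ (m+1) i = ((m+1+i).choose i : ZMod 2) := by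
            intro i hi
            exact ihm i (by simp at hi; omega)
          rw [Finset.sum_congr rfl hc, hsZ]
          congr 2
          omega
        · have hkm : k = m + 1 := by omega
          subst hkm
          rw [htop (m+1) (by omega)]
          rcases Nat.eq_zero_or_pos m with rfl | hm
          · rw [show σ (0+1+1) (0+1-1) = σ 2 0 from rfl, h0 2 one_le_two]
            decide
          · rw [show (m+1-1) = m from rfl]
            rw [hrec (m+1) (by omega) m hm (by omega)]
            have hc : ∀ i ∈ Finset.range (m+1), σ (m+1) i = ((m+1+i).choose i : ZMod 2) := by
              intro i hi
              exact ihm i (by simp at hi; omega)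
            rw [Finset.sum_congr rfl hc, hsZ]
            have e1 : (m+1+1+(m+1)).choose (m+1)
                = (2*m+2).choose m + (2*m+2).choose (m+1) := by
              have e : m+1+1+(m+1) = (2*m+2)+1 := by ring
              rw [e, Nat.choose_succ_succ]
            rw [e1]
            push_cast
            rw [centralEven]
            rw [show m+1+m+1 = 2*m+2 by ring]
            ring
end

section
/- Let R = Z_2[t_1, ..., t_n] / G where G is the ideal generated by t_1^2 and t_j^2 + t_{j-1} t_j for j = 2, ..., n. Then in R, for every i = 1, ..., n one has t_i^i = t_1 t_2 ⋯ t_i, and this element is nonzero, while t_i^{i+1} = 0. -/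
open MvPolynomial

/-- The ideal `G = (t₁², t₂² + t₁t₂, …, tₙ² + tₙ₋₁tₙ)` in `ℤ₂[t₁,…,tₙ]`,
with `tᵢ` represented by `X (i-1) : Fin n`. -/
noncomputable def cubeIdeal (n : ℕ) : Ideal (MvPolynomial (Fin n) (ZMod 2)) :=
  Ideal.span (Set.range fun j : Fin n =>
    X j ^ 2 +
      (if j.val = 0 then 0 else
        X (⟨j.val - 1, lt_of_le_of_lt (Nat.sub_le _ _) j.isLt⟩ : Fin n) * X j))

namespace CubeAux

open Finset

variable {n : ℕ}

/-- predecessor on `Fin n` (truncated). -/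
def pred (j : Fin n) : Fin n := ⟨j.val - 1, lt_of_le_of_lt (Nat.sub_le _ _) j.isLt⟩

/-- The generators of `cubeIdeal`. -/
noncomputable def gen (n : ℕ) (j : Fin n) : MvPolynomial (Fin n) (ZMod 2) :=
  X j ^ 2 +
    (if j.val = 0 then 0 else
      X (⟨j.val - 1, lt_of_le_of_lt (Nat.sub_le _ _) j.isLt⟩ : Fin n) * X j)

lemma gen_mem (j : Fin n) : gen n j ∈ cubeIdeal n := Ideal.subset_span ⟨j, rfl⟩

lemma sq_zero (j : Fin n) (hj : j.val = 0) :
    Ideal.Quotient.mk (cubeIdeal n) (X j ^ 2) = 0 := by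
  rw [Ideal.Quotient.eq_zero_iff_mem]
  have h : (X j ^ 2 : MvPolynomial (Fin n) (ZMod 2)) = gen n j := by
    rw [gen, if_pos hj, add_zero]
  rw [h]; exact gen_mem j

lemma sq_rel (j : Fin n) (hj : j.val ≠ 0) :
    Ideal.Quotient.mk (cubeIdeal n) (X j ^ 2) =
      Ideal.Quotient.mk (cubeIdeal n) (X (pred j) * X j) := by
  rw [Ideal.Quotient.eq, CharTwo.sub_eq_add]
  have h : (X j ^ 2 + X (pred j) * X j : MvPolynomial (Fin n) (ZMod 2)) = gen n j := by
    rw [gen, if_neg hj]; rfl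
  rw [h]; exact gen_mem j

lemma pow_shift (j : Fin n) (hj : j.val ≠ 0) (k : ℕ) :
    Ideal.Quotient.mk (cubeIdeal n) (X j ^ (k + 2)) =
      Ideal.Quotient.mk (cubeIdeal n) (X (pred j) ^ (k + 1) * X j) := by
  induction k with
  | zero =>
    simpa [pow_one] using sq_rel j hj
  | succ k ih =>
    have h1 : (X j : MvPolynomial (Fin n) (ZMod 2)) ^ (k + 1 + 2) = X j ^ (k + 2) * X j := by
      ring
    rw [h1, map_mul, ih, ← map_mul]
    have h2 : (X (pred j) ^ (k + 1) * X j * X j : MvPolynomial (Fin n) (ZMod 2)) =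
        X (pred j) ^ (k + 1) * X j ^ 2 := by ring
    rw [h2, map_mul, sq_rel j hj, ← map_mul]
    congr 1
    ring

lemma Iic_eq_singleton (j : Fin n) (hj : j.val = 0) : Finset.Iic j = {j} := by
  ext k
  simp only [Finset.mem_Iic, Finset.mem_singleton, Fin.le_def, Fin.ext_iff, hj]
  omega

lemma Iio_eq_Iic_pred (i : Fin n) (hi : i.val ≠ 0) : Finset.Iio i = Finset.Iic (pred i) := by
  ext k
  simp only [Finset.mem_Iio, Finset.mem_Iic, Fin.lt_def, Fin.le_def, pred]
  omega

lemma part1 : ∀ (m : ℕ) (i : Fin n), i.val = m →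
    Ideal.Quotient.mk (cubeIdeal n) (X i ^ (i.val + 1)) =
      Ideal.Quotient.mk (cubeIdeal n) (∏ j ∈ Finset.Iic i, X j) := by
  intro m
  induction m with
  | zero =>
    intro i hi
    rw [hi, pow_one, Iic_eq_singleton i hi, Finset.prod_singleton]
  | succ m ih =>
    intro i hi
    have hj : i.val ≠ 0 := by omega
    have hpred : (pred i).val = m := by simp [pred, hi]
    rw [hi, pow_shift i hj m, map_mul]
    have := ih (pred i) hpred
    rw [hpred] at this
    rw [this, ← map_mul]
    congr 1
    rw [show Finset.Iic i = insert i (Finset.Iio i) from (Finset.Iio_insert i).symm,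
      Finset.prod_insert (by simp), Iio_eq_Iic_pred i hj, mul_comm]

lemma part3 : ∀ (m : ℕ) (i : Fin n), i.val = m →
    Ideal.Quotient.mk (cubeIdeal n) (X i ^ (i.val + 2)) = 0 := by
  intro m
  induction m with
  | zero =>
    intro i hi
    rw [hi]
    exact sq_zero i hi
  | succ m ih =>
    intro i hi
    have hj : i.val ≠ 0 := by omega
    have hpred : (pred i).val = m := by simp [pred, hi]
    rw [hi, pow_shift i hj (m + 1), map_mul]
    have := ih (pred i) hpred
    rw [hpred] at this
    rw [this, zero_mul]

/-! ### The linear functional certifying nonvanishing -/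

/-- The "ballot" condition on exponent vectors. -/
def okSet (α : Fin n →₀ ℕ) : Prop := ∀ j : Fin n, (∑ k ∈ Finset.Iic j, α k) ≤ j.val + 1

instance (α : Fin n →₀ ℕ) : Decidable (okSet α) := by unfold okSet; infer_instance

/-- Sum of coefficients over "ok" monomials. -/
noncomputable def L (n : ℕ) (p : MvPolynomial (Fin n) (ZMod 2)) : ZMod 2 :=
  ∑ α ∈ p.support, if okSet α then MvPolynomial.coeff α p else 0

lemma L_eq_sum_subset {p : MvPolynomial (Fin n) (ZMod 2)} {s : Finset (Fin n →₀ ℕ)}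
    (h : p.support ⊆ s) :
    L n p = ∑ α ∈ s, if okSet α then MvPolynomial.coeff α p else 0 := by
  refine Finset.sum_subset h ?_
  intro x _ hx
  rw [MvPolynomial.notMem_support_iff.mp hx]
  simp

lemma L_add (p q : MvPolynomial (Fin n) (ZMod 2)) : L n (p + q) = L n p + L n q := by
  classical
  rw [L_eq_sum_subset (MvPolynomial.support_add (p := p) (q := q)),
    L_eq_sum_subset (s := p.support ∪ q.support) Finset.subset_union_left,
    L_eq_sum_subset (s := p.support ∪ q.support) Finset.subset_union_right,
    ← Finset.sum_add_distrib]
  refine Finset.sum_congr rfl ?_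
  intro α _
  rw [MvPolynomial.coeff_add]
  split_ifs <;> simp

lemma L_zero : L n 0 = 0 := by simp [L]

lemma L_monomial (α : Fin n →₀ ℕ) (c : ZMod 2) :
    L n (monomial α c) = if okSet α then c else 0 := by
  classical
  rw [L, MvPolynomial.support_monomial]
  by_cases hc : c = 0
  · simp [hc]
  · rw [if_neg hc, Finset.sum_singleton, MvPolynomial.coeff_monomial, if_pos rfl]

lemma sum_Iic_add_single (α : Fin n →₀ ℕ) (j K : Fin n) (c : ℕ) :
    (∑ k ∈ Finset.Iic K, (α + Finsupp.single j c) k) =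
      (∑ k ∈ Finset.Iic K, α k) + if j ≤ K then c else 0 := by
  simp only [Finsupp.add_apply]
  rw [Finset.sum_add_distrib]
  congr 1
  simp only [Finsupp.single_apply]
  rw [Finset.sum_ite_eq (Finset.Iic K) j (fun _ => c)]
  simp [Finset.mem_Iic]

lemma sum_Iic_mono (α : Fin n →₀ ℕ) {K₁ K₂ : Fin n} (h : K₁ ≤ K₂) :
    (∑ k ∈ Finset.Iic K₁, α k) ≤ ∑ k ∈ Finset.Iic K₂, α k :=
  Finset.sum_le_sum_of_subset (Finset.Iic_subset_Iic.mpr h)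

lemma not_ok_zero (α : Fin n →₀ ℕ) (j : Fin n) (hj : j.val = 0) :
    ¬ okSet (α + Finsupp.single j 2) := by
  intro h
  have := h j
  rw [sum_Iic_add_single, if_pos le_rfl, hj] at this
  omega

lemma ok_iff (α : Fin n →₀ ℕ) (j : Fin n) (hj : j.val ≠ 0) :
    okSet (α + Finsupp.single j 2) ↔
      okSet (α + (Finsupp.single (pred j) 1 + Finsupp.single j 1)) := by
  have hpj : pred j ≤ j := by
    rw [Fin.le_def]; exact Nat.sub_le _ _
  constructor
  · intro h K
    rw [← add_assoc, sum_Iic_add_single, sum_Iic_add_single]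
    have hK := h K
    rw [sum_Iic_add_single] at hK
    by_cases h1 : j ≤ K
    · rw [if_pos h1] at hK
      rw [if_pos (le_trans hpj h1), if_pos h1]
      omega
    · rw [if_neg h1] at hK
      rw [if_neg h1]
      by_cases h2 : pred j ≤ K
      · rw [if_pos h2]
        -- here K.val = j.val - 1, so K = pred j
        have hKval : K.val = j.val - 1 := by
          rw [Fin.le_def] at h1 h2
          simp only [pred] at h2
          omega
        have hKj : K ≤ j := by rw [Fin.le_def]; omega
        have hj2 := h j
        rw [sum_Iic_add_single, if_pos le_rfl] at hj2
        have hmono := sum_Iic_mono α hKj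
        omega
      · rw [if_neg h2]; omega
  · intro h K
    rw [sum_Iic_add_single]
    have hK := h K
    rw [← add_assoc, sum_Iic_add_single, sum_Iic_add_single] at hK
    by_cases h1 : j ≤ K
    · rw [if_pos h1]
      rw [if_pos (le_trans hpj h1), if_pos h1] at hK
      omega
    · rw [if_neg h1]
      rw [if_neg h1] at hK
      by_cases h2 : pred j ≤ K
      · rw [if_pos h2] at hK; omega
      · rw [if_neg h2] at hK; omega

lemma X_eq_monomial (a : Fin n) :
    (X a : MvPolynomial (Fin n) (ZMod 2)) = monomial (Finsupp.single a 1) 1 := by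
  rw [← X_pow_eq_monomial, pow_one]

lemma L_mul_gen (g : MvPolynomial (Fin n) (ZMod 2)) (j : Fin n) :
    L n (g * gen n j) = 0 := by
  induction g using MvPolynomial.induction_on' with
  | add p q hp hq => rw [add_mul, L_add, hp, hq, add_zero]
  | monomial α c =>
    by_cases hj : j.val = 0
    · rw [gen, if_pos hj, add_zero, X_pow_eq_monomial, monomial_mul, L_monomial,
        if_neg (not_ok_zero α j hj)]
    · have hgen : gen n j = X j ^ 2 + X (pred j) * X j := by
        rw [gen, if_neg hj]; rfl
      rw [hgen, mul_add, X_pow_eq_monomial, X_eq_monomial, X_eq_monomial,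
        monomial_mul, monomial_mul, monomial_mul, L_add, L_monomial, L_monomial,
        mul_one, mul_one]
      rw [mul_one]
      have hiff := ok_iff α j hj
      by_cases h : okSet (α + Finsupp.single j 2)
      · rw [if_pos h, if_pos (hiff.mp h)]
        exact CharTwo.add_self_eq_zero c
      · rw [if_neg h, if_neg (fun hh => h (hiff.mpr hh))]
        exact add_zero 0

lemma L_vanish {p : MvPolynomial (Fin n) (ZMod 2)} (hp : p ∈ cubeIdeal n) : L n p = 0 := by
  have H : ∀ g, L n (g * p) = 0 := by
    refine Submodule.span_induction
      (p := fun x _ => ∀ g, L n (g * x) = 0) ?_ ?_ ?_ ?_ hp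
    · rintro x ⟨j, rfl⟩ g
      exact L_mul_gen g j
    · intro g; rw [mul_zero]; exact L_zero
    · intro x y _ _ ihx ihy g
      rw [mul_add, L_add, ihx, ihy, add_zero]
    · intro a x _ ihx g
      rw [smul_eq_mul, ← mul_assoc]
      exact ihx (g * a)
  simpa using H 1

lemma prod_X_eq_monomial (s : Finset (Fin n)) :
    (∏ j ∈ s, X j : MvPolynomial (Fin n) (ZMod 2)) =
      monomial (∑ j ∈ s, Finsupp.single j 1) 1 := by
  classical
  induction s using Finset.induction_on with
  | empty => simp
  | insert _ _ h ih =>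
    rw [Finset.prod_insert h, Finset.sum_insert h, ih, X_eq_monomial, monomial_mul, one_mul]

lemma ok_indicator (i : Fin n) : okSet (∑ j ∈ Finset.Iic i, Finsupp.single j (1 : ℕ)) := by
  intro K
  have hb : ∀ k ∈ Finset.Iic K, (∑ j ∈ Finset.Iic i, Finsupp.single j (1 : ℕ)) k ≤ 1 := by
    intro k _
    rw [Finsupp.finset_sum_apply]
    simp only [Finsupp.single_apply]
    rw [Finset.sum_ite_eq' (Finset.Iic i) k (fun _ => 1)]
    split <;> omega
  have := Finset.sum_le_card_nsmul (Finset.Iic K)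
    (fun k => (∑ j ∈ Finset.Iic i, Finsupp.single j (1 : ℕ)) k) 1 hb
  rw [Fin.card_Iic, smul_eq_mul, mul_one] at this
  exact this

lemma part2 (i : Fin n) :
    Ideal.Quotient.mk (cubeIdeal n) (∏ j ∈ Finset.Iic i, X j) ≠ 0 := by
  intro h
  rw [Ideal.Quotient.eq_zero_iff_mem] at h
  have hL := L_vanish h
  rw [prod_X_eq_monomial, L_monomial, if_pos (ok_indicator i)] at hL
  exact one_ne_zero hL

end CubeAux

/-- In `R = ℤ₂[t₁,…,tₙ]/G`, for every `i = 1,…,n` (here `i : Fin n`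
represents `t_{i+1}`), one has `tᵢ^i = t₁t₂⋯tᵢ`, this element is nonzero, and
`tᵢ^{i+1} = 0`. -/
theorem stmt3 (n : ℕ) (i : Fin n) :
    Ideal.Quotient.mk (cubeIdeal n) (X i ^ (i.val + 1)) =
      Ideal.Quotient.mk (cubeIdeal n) (∏ j ∈ Finset.Iic i, X j) ∧
    Ideal.Quotient.mk (cubeIdeal n) (X i ^ (i.val + 1)) ≠ 0 ∧
    Ideal.Quotient.mk (cubeIdeal n) (X i ^ (i.val + 2)) = 0 := by
  refine ⟨CubeAux.part1 i.val i rfl, ?_, CubeAux.part3 i.val i rfl⟩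
  rw [CubeAux.part1 i.val i rfl]
  exact CubeAux.part2 i
end

section
/- Let R = Z_2[t_1, ..., t_n] / G where G is generated by t_1^2 and t_j^2 + t_{j-1} t_j for j = 2, ..., n. Then the monomial t_1 t_2 ⋯ t_n is nonzero in R. -/
open MvPolynomial

namespace Stmt4

variable {n : ℕ}

/-- partial sum of exponents with index `< k`. -/
def S (a : Fin n →₀ ℕ) (k : ℕ) : ℕ :=
  ∑ j ∈ Finset.univ.filter (fun j : Fin n => (j : ℕ) < k), a j

lemma S_add (a b : Fin n →₀ ℕ) (k : ℕ) : S (a + b) k = S a k + S b k := by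
  simp [S, Finset.sum_add_distrib]

lemma S_single (j : Fin n) (v : ℕ) (k : ℕ) :
    S (Finsupp.single j v) k = if (j : ℕ) < k then v else 0 := by
  classical
  simp only [S, Finsupp.single_apply]
  rw [Finset.sum_ite_eq]
  simp

lemma S_mono (a : Fin n →₀ ℕ) {k m : ℕ} (h : k ≤ m) : S a k ≤ S a m := by
  apply Finset.sum_le_sum_of_subset
  intro j hj
  simp only [Finset.mem_filter, Finset.mem_univ, true_and] at *
  omega

def Cond (n : ℕ) (a : Fin n →₀ ℕ) : Prop := (∀ k, S a k ≤ k) ∧ S a n = n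

noncomputable def f (n : ℕ) (a : Fin n →₀ ℕ) : ZMod 2 :=
  letI := Classical.dec (Cond n a); if Cond n a then 1 else 0

noncomputable def L (n : ℕ) : MvPolynomial (Fin n) (ZMod 2) →ₗ[ZMod 2] ZMod 2 :=
  (Finsupp.linearCombination _ (f n)).comp (AddMonoidAlgebra.coeffLinearEquiv (ZMod 2)).toLinearMap

lemma L_monomial (a : Fin n →₀ ℕ) (c : ZMod 2) :
    L n (monomial a c) = c * f n a := by
  simp [L, AddMonoidAlgebra.coeffLinearEquiv]
  rw [show AddMonoidAlgebra.coeff (monomial a c) = Finsupp.single a c from rfl, Finsupp.linearCombination_single,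
    smul_eq_mul]

lemma f_first (a : Fin n →₀ ℕ) (j : Fin n) (hj : (j : ℕ) = 0) :
    f n (a + Finsupp.single j 2) = 0 := by
  have h : ¬ Cond n (a + Finsupp.single j 2) := by
    rintro ⟨h1, -⟩
    have := h1 1
    rw [S_add, S_single, hj] at this
    simp at this
  simp [f, h]

lemma f_step (a : Fin n →₀ ℕ) (j j' : Fin n) (hj : (j' : ℕ) + 1 = (j : ℕ)) :
    f n (a + Finsupp.single j 2) = f n (a + (Finsupp.single j' 1 + Finsupp.single j 1)) := by
  have key : Cond n (a + Finsupp.single j 2) ↔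
      Cond n (a + (Finsupp.single j' 1 + Finsupp.single j 1)) := by
    have hSl : ∀ k, S (a + Finsupp.single j 2) k
        = S a k + (if (j : ℕ) < k then 2 else 0) := by
      intro k; rw [S_add, S_single]
    have hSr : ∀ k, S (a + (Finsupp.single j' 1 + Finsupp.single j 1)) k
        = S a k + ((if (j' : ℕ) < k then 1 else 0) + (if (j : ℕ) < k then 1 else 0)) := by
      intro k; rw [S_add, S_add, S_single, S_single]
    constructor
    · rintro ⟨h1, h2⟩
      have hext := h1 ((j : ℕ) + 1)
      rw [hSl, if_pos (Nat.lt_succ_self _)] at hext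
      refine ⟨fun k => ?_, ?_⟩
      · have h1k := h1 k
        rw [hSl] at h1k
        rw [hSr]
        by_cases hk : (j : ℕ) < k
        · rw [if_pos hk] at h1k
          rw [if_pos hk, if_pos (by omega : (j' : ℕ) < k)]
          omega
        · rw [if_neg hk] at h1k
          rw [if_neg hk]
          by_cases hk' : (j' : ℕ) < k
          · rw [if_pos hk']
            have hmon : S a k ≤ S a ((j : ℕ) + 1) := S_mono a (by omega)
            omega
          · rw [if_neg hk']
            omega
      · rw [hSl, if_pos j.isLt] at h2
        rw [hSr, if_pos j.isLt, if_pos j'.isLt]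
        omega
    · rintro ⟨h1, h2⟩
      refine ⟨fun k => ?_, ?_⟩
      · have h1k := h1 k
        rw [hSr] at h1k
        rw [hSl]
        by_cases hk : (j : ℕ) < k
        · rw [if_pos hk, if_pos (by omega : (j' : ℕ) < k)] at h1k
          rw [if_pos hk]
          omega
        · rw [if_neg hk] at h1k
          rw [if_neg hk]
          by_cases hk' : (j' : ℕ) < k
          · rw [if_pos hk'] at h1k
            omega
          · rw [if_neg hk'] at h1k
            omega
      · rw [hSr, if_pos j.isLt, if_pos j'.isLt] at h2
        rw [hSl, if_pos j.isLt]
        omega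
  classical
  simp only [f]
  split_ifs with h1 h2 h2 <;> first | rfl | (exact absurd (key.mp h1) h2) | (exact absurd (key.mpr h2) h1)

lemma L_vanish {x : MvPolynomial (Fin n) (ZMod 2)} (hx : x ∈ cubeIdeal n) :
    L n x = 0 := by
  have main : ∀ r : MvPolynomial (Fin n) (ZMod 2), L n (r * x) = 0 := by
    refine Submodule.span_induction (p := fun x _ => ∀ r, L n (r * x) = 0)
      ?_ ?_ ?_ ?_ hx
    · rintro y ⟨j, rfl⟩ r
      induction r using MvPolynomial.induction_on' with
      | add p q hp hq => rw [add_mul, map_add, hp, hq, add_zero]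
      | monomial a c =>
        by_cases hj : (j : ℕ) = 0
        · simp only [hj, if_pos, reduceIte, add_zero]
          rw [X_pow_eq_monomial, monomial_mul, L_monomial, mul_one]
          rw [f_first a j hj, mul_zero]
        · simp only [if_neg hj]
          set j' : Fin n := ⟨j.val - 1, lt_of_le_of_lt (Nat.sub_le _ _) j.isLt⟩
          have hX : (X j' * X j : MvPolynomial (Fin n) (ZMod 2))
              = monomial (Finsupp.single j' 1 + Finsupp.single j 1) 1 := by
            rw [X, X, monomial_mul, mul_one]
          rw [X_pow_eq_monomial, hX, mul_add, monomial_mul, monomial_mul, map_add,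
            L_monomial, L_monomial, mul_one,
            f_step a j j' (by simp [j']; omega)]
          rw [← mul_add, CharTwo.add_self_eq_zero, mul_zero]
    · intro r; rw [mul_zero, map_zero]
    · intro y z _ _ hy hz r
      rw [mul_add, map_add, hy, hz, add_zero]
    · intro c y _ hy r
      rw [smul_eq_mul, ← mul_assoc, hy]
  simpa using main 1

lemma prod_X_eq (s : Finset (Fin n)) :
    (∏ j ∈ s, X j : MvPolynomial (Fin n) (ZMod 2))
      = monomial (∑ j ∈ s, Finsupp.single j 1) 1 := by
  classical
  induction s using Finset.induction_on with
  | empty => simp [monomial_zero']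
  | insert j s hj ih =>
    rw [Finset.prod_insert hj, Finset.sum_insert hj, ih, X, monomial_mul, mul_one]

lemma f_top : f n (∑ j : Fin n, Finsupp.single j 1) = 1 := by
  have hS : ∀ k, S (∑ j : Fin n, Finsupp.single j 1) k
      = (Finset.univ.filter (fun j : Fin n => (j : ℕ) < k)).card := by
    intro k
    have : S (∑ j : Fin n, Finsupp.single j 1) k
        = ∑ j' ∈ Finset.univ.filter (fun j : Fin n => (j : ℕ) < k),
            (∑ j : Fin n, Finsupp.single j 1) j' := rfl
    rw [this]
    rw [Finset.sum_congr rfl (fun j' _ => ?_)]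
    · rw [Finset.sum_const, smul_eq_mul, mul_one]
    · rw [Finsupp.finset_sum_apply]
      rw [Finset.sum_eq_single j']
      · simp [Finsupp.single_apply]
      · intro b _ hb; simp [Finsupp.single_apply, hb]
      · simp
  have hcond : Cond n (∑ j : Fin n, Finsupp.single j 1) := by
    constructor
    · intro k
      rw [hS]
      calc (Finset.univ.filter (fun j : Fin n => (j : ℕ) < k)).card
          ≤ (Finset.range k).card := by
            refine Finset.card_le_card_of_injOn (fun j => (j : ℕ)) ?_ ?_
            · intro j hj
              simp only [Finset.coe_filter, Set.mem_setOf_eq] at hj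
              simp [hj.2]
            · intro x _ y _ h; exact Fin.ext h
        _ = k := Finset.card_range k
    · rw [hS]
      have : Finset.univ.filter (fun j : Fin n => (j : ℕ) < n) = Finset.univ := by
        ext j; simp [j.isLt]
      rw [this, Finset.card_univ, Fintype.card_fin]
  simp [f, hcond]

end Stmt4

/-- In `R = ℤ₂[t₁,…,tₙ]/G`, the monomial `t₁t₂⋯tₙ` is nonzero. -/
theorem stmt4 (n : ℕ) :
    Ideal.Quotient.mk (cubeIdeal n) (∏ j : Fin n, X j) ≠ 0 := by
  intro h
  rw [Ideal.Quotient.eq_zero_iff_mem] at h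
  have := Stmt4.L_vanish h
  rw [Stmt4.prod_X_eq, Stmt4.L_monomial, one_mul, Stmt4.f_top] at this
  exact one_ne_zero this
end

section
/- Let R = Z_2[t_1, ..., t_n]/G with G generated by t_1^2 and t_j^2 + t_{j-1}t_j for j = 2,...,n. In R, the element (1 + t_1)(1 + t_2)⋯(1 + t_{n-1}) is a unit, with inverse (1 + t_1)(1 + t_2 + t_2^2)⋯(1 + t_{n-1} + t_{n-1}^2 + ⋯ + t_{n-1}^{n-1}). -/
open MvPolynomial

lemma cube_two_eq_zero (n : ℕ) :
    (2 : MvPolynomial (Fin n) (ZMod 2) ⧸ cubeIdeal n) = 0 := by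
  have h1 : (2 : MvPolynomial (Fin n) (ZMod 2)) = 0 := by
    have := CharP.cast_eq_zero (MvPolynomial (Fin n) (ZMod 2)) 2
    simpa using this
  rw [← map_ofNat (Ideal.Quotient.mk (cubeIdeal n)) 2, h1, map_zero]

lemma cube_pow_zero (n : ℕ) (j : Fin n) :
    (Ideal.Quotient.mk (cubeIdeal n)) (X j) ^ (j.val + 2) = 0 := by
  set mk := Ideal.Quotient.mk (cubeIdeal n) with hmk
  have h0 : ∀ j : Fin n, mk (X j ^ 2 +
      (if j.val = 0 then 0 else
        X (⟨j.val - 1, lt_of_le_of_lt (Nat.sub_le _ _) j.isLt⟩ : Fin n) * X j)) = 0 :=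
    fun j => Ideal.Quotient.eq_zero_iff_mem.2 (Ideal.subset_span ⟨j, rfl⟩)
  have htwo := cube_two_eq_zero n
  have hsq : ∀ j : Fin n, mk (X j) ^ 2 =
      (if j.val = 0 then 0 else
        mk (X (⟨j.val - 1, lt_of_le_of_lt (Nat.sub_le _ _) j.isLt⟩ : Fin n)) * mk (X j)) := by
    intro j
    have := h0 j
    rw [map_add, map_pow] at this
    have h2 : ∀ a b : MvPolynomial (Fin n) (ZMod 2) ⧸ cubeIdeal n, a + b = 0 → a = b := by
      intro a b hab
      linear_combination hab - htwo * b
    apply h2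
    convert this using 2
    split
    · simp
    · rw [map_mul]
  suffices H : ∀ v (hv : v < n), mk (X (⟨v, hv⟩ : Fin n)) ^ (v + 2) = 0 by
    exact H j.val j.isLt
  intro v
  induction v using Nat.strong_induction_on with
  | _ v ih =>
    intro hv
    match v, hv with
    | 0, hv =>
      have := hsq ⟨0, hv⟩
      rw [if_pos rfl] at this
      exact this
    | w + 1, hv =>
      have hw : w < n := lt_trans (lt_add_one w) hv
      set a := mk (X (⟨w + 1, hv⟩ : Fin n)) with ha
      set b := mk (X (⟨w, hw⟩ : Fin n)) with hb
      have hab : a ^ 2 = b * a := by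
        have := hsq ⟨w + 1, hv⟩
        simpa using this
      have key : ∀ k, a ^ (k + 1) = b ^ k * a := by
        intro k
        induction k with
        | zero => simp
        | succ k ihk =>
          calc a ^ (k + 2) = a ^ (k + 1) * a := by ring
            _ = (b ^ k * a) * a := by rw [ihk]
            _ = b ^ k * a ^ 2 := by ring
            _ = b ^ k * (b * a) := by rw [hab]
            _ = b ^ (k + 1) * a := by ring
      have hbz : b ^ (w + 2) = 0 := ih w (lt_add_one w) hw
      calc a ^ (w + 1 + 2) = a ^ ((w + 2) + 1) := by ring
        _ = b ^ (w + 2) * a := key (w + 2)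
        _ = 0 := by rw [hbz, zero_mul]

/-- In `R = ℤ₂[t₁,…,tₙ]/G`, the element `(1+t₁)⋯(1+tₙ₋₁)` is a unit,
with inverse `(1+t₁)(1+t₂+t₂²)⋯(1+tₙ₋₁+⋯+tₙ₋₁^{n-1})`.  Here `j : Fin (n-1)`
represents paper index `j+1`, so the corresponding inverse factor is `∑_{s=0}^{j+1} t^s`. -/
theorem stmt5 (n : ℕ) :
    IsUnit (Ideal.Quotient.mk (cubeIdeal n)
      (∏ j : Fin (n - 1), (1 + X (Fin.castLE (Nat.sub_le n 1) j)))) ∧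
    (Ideal.Quotient.mk (cubeIdeal n)
        (∏ j : Fin (n - 1), (1 + X (Fin.castLE (Nat.sub_le n 1) j)))) *
      (Ideal.Quotient.mk (cubeIdeal n)
        (∏ j : Fin (n - 1),
          ∑ s ∈ Finset.range (j.val + 2), X (Fin.castLE (Nat.sub_le n 1) j) ^ s)) = 1 := by
  set mk := Ideal.Quotient.mk (cubeIdeal n) with hmk
  have htwo := cube_two_eq_zero n
  have hm1 : (-1 : MvPolynomial (Fin n) (ZMod 2) ⧸ cubeIdeal n) = 1 := by
    linear_combination -htwo
  have key : mk (∏ j : Fin (n - 1), (1 + X (Fin.castLE (Nat.sub_le n 1) j))) *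
      mk (∏ j : Fin (n - 1),
        ∑ s ∈ Finset.range (j.val + 2), X (Fin.castLE (Nat.sub_le n 1) j) ^ s) = 1 := by
    rw [map_prod, map_prod, ← Finset.prod_mul_distrib]
    apply Finset.prod_eq_one
    intro j _
    set t := mk (X (Fin.castLE (Nat.sub_le n 1) j)) with ht
    have htz : t ^ (j.val + 2) = 0 := by
      exact cube_pow_zero n (Fin.castLE (Nat.sub_le n 1) j)
    have hS : mk (∑ s ∈ Finset.range (j.val + 2), X (Fin.castLE (Nat.sub_le n 1) j) ^ s) =
        ∑ s ∈ Finset.range (j.val + 2), t ^ s := by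
      rw [map_sum]
      simp [ht]
    rw [map_add, map_one, hS, ← ht]
    calc (1 + t) * ∑ s ∈ Finset.range (j.val + 2), t ^ s
        = (∑ s ∈ Finset.range (j.val + 2), t ^ s) * (t - 1) := by
          rw [sub_eq_add_neg, hm1]; ring
      _ = t ^ (j.val + 2) - 1 := geom_sum_mul t (j.val + 2)
      _ = 1 := by rw [htz, zero_sub, hm1]
  exact ⟨IsUnit.of_mul_eq_one _ key, key⟩
end

section
/- In the ring R = Z_2[u_1,...,u_n]/F, where F is generated by u_1^2 and u_i^2 + u_1 u_i + ⋯ + u_{i-1} u_i for i = 2,...,n, one has u_i^i ≠ 0 and u_i^{i+1} = 0 for every i = 1,...,n. -/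
open MvPolynomial

/-- The ideal `F = (u₁², uᵢ² + u₁uᵢ + ⋯ + uᵢ₋₁uᵢ : i = 1,…,n)` in `ℤ₂[u₁,…,uₙ]`;
the `i`-th generator is `(∑_{j ≤ i} uⱼ)·uᵢ` (signs are irrelevant mod 2). -/
noncomputable def uIdeal (n : ℕ) : Ideal (MvPolynomial (Fin n) (ZMod 2)) :=
  Ideal.span (Set.range fun i : Fin n => (∑ j ∈ Finset.Iic i, X j) * X i)

namespace Stmt9Aux

variable {n : ℕ}

/-! ### Generalities: characteristic two helpers -/

lemma addSelf {A : Type*} [AddCommMonoid A] [Module (ZMod 2) A] (a : A) : a + a = 0 := by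
  rw [← two_smul (ZMod 2) a, show (2 : ZMod 2) = 0 from rfl, zero_smul]

lemma eq_of_add_eq_zero {A : Type*} [AddCommMonoid A] [Module (ZMod 2) A] {a b : A}
    (h : a + b = 0) : a = b := by
  calc a = a + (b + b) := by rw [addSelf, add_zero]
    _ = (a + b) + b := by rw [add_assoc]
    _ = b := by rw [h, zero_add]

lemma pow_step {A : Type*} [CommRing A] (t s : A) (h : s ^ 2 = t * s) :
    ∀ k, s ^ (k + 2) = t ^ (k + 1) * s := by
  intro k; induction k with
  | zero => simpa using h
  | succ k ih =>
      have h3 : s ^ (k + 1 + 2) = s ^ (k + 2) * s := by ring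
      rw [h3, ih, mul_assoc, ← sq, h]; ring

/-! ### Part 1: vanishing of `uᵢ^(i+2)` -/

noncomputable def mk (n : ℕ) := Ideal.Quotient.mk (uIdeal n)

noncomputable def sR (j : Fin n) : MvPolynomial (Fin n) (ZMod 2) ⧸ uIdeal n :=
  mk n (∑ k ∈ Finset.Iic j, X k)

noncomputable def tR (j : Fin n) : MvPolynomial (Fin n) (ZMod 2) ⧸ uIdeal n :=
  mk n (∑ k ∈ Finset.Iio j, X k)

lemma s_eq (j : Fin n) : sR j = tR j + mk n (X j) := by
  rw [sR, tR, show Finset.Iic j = insert j (Finset.Iio j) from (Finset.Iio_insert j).symm,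
    Finset.sum_insert (by simp), map_add]
  ring

lemma sx_zero (j : Fin n) : sR j * mk n (X j) = 0 := by
  rw [sR, mk, ← map_mul, Ideal.Quotient.eq_zero_iff_mem]
  exact Ideal.subset_span ⟨j, rfl⟩

lemma s_sq (j : Fin n) : sR j ^ 2 = tR j * sR j := by
  calc sR j ^ 2 = sR j * (tR j + mk n (X j)) := by rw [← s_eq]; ring
    _ = tR j * sR j + sR j * mk n (X j) := by ring
    _ = tR j * sR j := by rw [sx_zero, add_zero]

lemma tR_zero (j : Fin n) (hj : j.val = 0) : tR j = 0 := by
  have h : Finset.Iio j = ∅ := by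
    ext k; simp only [Finset.mem_Iio, Finset.notMem_empty, iff_false, Fin.lt_def]; omega
  rw [tR, h, Finset.sum_empty, map_zero]

lemma tR_succ (j : Fin n) (m : ℕ) (hj : j.val = m + 1) :
    tR j = sR (⟨m, by omega⟩ : Fin n) := by
  have he : Finset.Iio j = Finset.Iic (⟨m, by omega⟩ : Fin n) := by
    ext k; simp only [Finset.mem_Iio, Finset.mem_Iic, Fin.lt_def, Fin.le_def]; omega
  rw [tR, sR, he]

lemma sR_pow : ∀ m : ℕ, ∀ j : Fin n, j.val = m → sR j ^ (m + 2) = 0 := by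
  intro m
  induction m with
  | zero =>
      intro j hj
      rw [pow_step (tR j) (sR j) (s_sq j), tR_zero j hj]
      simp
  | succ m ih =>
      intro j hj
      rw [pow_step (tR j) (sR j) (s_sq j), tR_succ j m hj, ih _ rfl, zero_mul]

lemma x_sq (j : Fin n) : mk n (X j) ^ 2 = tR j * mk n (X j) := by
  have h := sx_zero j
  rw [s_eq j] at h
  refine (eq_of_add_eq_zero ?_).symm
  rw [← h]; ring

lemma vanish (i : Fin n) : mk n (X i ^ (i.val + 2)) = 0 := by
  rw [mk, map_pow]
  rw [show Ideal.Quotient.mk (uIdeal n) (X i) = mk n (X i) from rfl]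
  rw [pow_step (tR i) (mk n (X i)) (x_sq i)]
  rcases Nat.eq_zero_or_pos i.val with h | h
  · rw [tR_zero i h]; simp
  · have hm : i.val = (i.val - 1) + 1 := by omega
    rw [tR_succ i (i.val - 1) hm, show i.val + 1 = (i.val - 1) + 2 by omega,
      sR_pow (i.val - 1) _ rfl, zero_mul]

/-! ### Part 2: non-vanishing of `uᵢ^(i+1)` -/

noncomputable def prev (j : Fin n) : MvPolynomial (Fin n) (ZMod 2) :=
  if 0 < j.val then X (⟨j.val - 1, Nat.lt_of_le_of_lt (Nat.sub_le _ _) j.isLt⟩ : Fin n) else 0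

noncomputable def psi : MvPolynomial (Fin n) (ZMod 2) →ₐ[ZMod 2] MvPolynomial (Fin n) (ZMod 2) :=
  aeval (fun j => X j + prev j)

lemma psi_X (j : Fin n) : psi (X j) = X j + prev j := aeval_X _ _

lemma hX (k : Fin n) :
    (X k : MvPolynomial (Fin n) (ZMod 2)) = monomial (Finsupp.single k 1) 1 := by
  rw [← X_pow_eq_monomial, pow_one]

lemma psi_sum : ∀ m : ℕ, ∀ j : Fin n, j.val = m →
    psi (∑ k ∈ Finset.Iic j, X k) = X j := by
  intro m
  induction m with
  | zero =>
      intro j hj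
      have hIio : Finset.Iio j = ∅ := by
        ext k; simp only [Finset.mem_Iio, Finset.notMem_empty, iff_false, Fin.lt_def]; omega
      rw [show Finset.Iic j = insert j (Finset.Iio j) from (Finset.Iio_insert j).symm,
        Finset.sum_insert (by simp), hIio, Finset.sum_empty, add_zero, psi_X,
        prev, if_neg (by omega), add_zero]
  | succ m ih =>
      intro j hj
      have hlt : m < n := by omega
      have hIio : Finset.Iio j = Finset.Iic (⟨m, hlt⟩ : Fin n) := by
        ext k; simp only [Finset.mem_Iio, Finset.mem_Iic, Fin.lt_def, Fin.le_def]; omega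
      rw [show Finset.Iic j = insert j (Finset.Iio j) from (Finset.Iio_insert j).symm,
        Finset.sum_insert (by simp), map_add, psi_X, hIio, ih _ rfl,
        prev, if_pos (by omega)]
      have hfe : (⟨j.val - 1, Nat.lt_of_le_of_lt (Nat.sub_le _ _) j.isLt⟩ : Fin n)
          = (⟨m, hlt⟩ : Fin n) := by
        apply Fin.ext; simp; omega
      rw [hfe, add_assoc, addSelf, add_zero]

lemma psi_gen (j : Fin n) :
    psi ((∑ k ∈ Finset.Iic j, X k) * X j) = X j * (X j + prev j) := by
  rw [map_mul, psi_sum j.val j rfl, psi_X]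

/-! #### The good monomials and the linear functional `L` -/

def Good (i : Fin n) (β : Fin n →₀ ℕ) : Prop :=
  (∀ k, i < k → β k = 0) ∧ (∑ k, β k = i.val + 1) ∧
    (∀ j, j ≤ i → ∑ k ∈ Finset.Iic j, β k ≤ j.val + 1)

instance (i : Fin n) : DecidablePred (Good i) := fun β => by
  unfold Good; infer_instance

noncomputable def L (i : Fin n) : MvPolynomial (Fin n) (ZMod 2) →+ ZMod 2 where
  toFun p := (AddMonoidAlgebra.coeff p).sum fun β c => if Good i β then c else 0
  map_zero' := by exact Finsupp.sum_zero_index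
  map_add' p q := by
    show (AddMonoidAlgebra.coeff p + AddMonoidAlgebra.coeff q).sum (fun β c => if Good i β then c else 0)
        = (AddMonoidAlgebra.coeff p).sum (fun β c => if Good i β then c else 0)
          + (AddMonoidAlgebra.coeff q).sum (fun β c => if Good i β then c else 0)
    refine Finsupp.sum_add_index' (fun β => ?_) (fun β c₁ c₂ => ?_)
    · exact ite_self 0
    · by_cases h : Good i β <;> simp [h]

lemma L_apply (i : Fin n) (p : MvPolynomial (Fin n) (ZMod 2)) :
    L i p = (AddMonoidAlgebra.coeff p).sum fun β c => if Good i β then c else 0 := rfl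

lemma L_monomial (i : Fin n) (β : Fin n →₀ ℕ) (c : ZMod 2) :
    L i (monomial β c) = if Good i β then c else 0 := by
  rw [L_apply, MvPolynomial.sum_monomial_eq]
  exact ite_self 0

/-! #### Combinatorial facts about good monomials -/

lemma sum_apply_single (β : Fin n →₀ ℕ) (j : Fin n) (s : Finset (Fin n)) :
    ∑ k ∈ s, (β + (Finsupp.single j 1 : Fin n →₀ ℕ)) k
      = (∑ k ∈ s, β k) + (if j ∈ s then 1 else 0) := by
  classical
  simp [Finsupp.add_apply, Finset.sum_add_distrib, Finsupp.single_apply, Finset.sum_ite_eq]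

lemma sum_single_apply (a : Fin n) (v : ℕ) (s : Finset (Fin n)) :
    ∑ k ∈ s, (Finsupp.single a v : Fin n →₀ ℕ) k = if a ∈ s then v else 0 := by
  simp [Finsupp.single_apply, Finset.sum_ite_eq]

lemma not_good_base (i j : Fin n) (hj : j.val = 0) (β : Fin n →₀ ℕ) :
    ¬ Good i (β + Finsupp.single j 1 + Finsupp.single j 1) := by
  rintro ⟨h1, h2, h3⟩
  have hji : j ≤ i := by rw [Fin.le_def]; omega
  have h3j := h3 j hji
  rw [sum_apply_single, sum_apply_single] at h3j
  simp only [Finset.mem_Iic, le_refl, if_pos] at h3j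
  omega

lemma good_succ_iff (i j j' : Fin n) (hj : j'.val + 1 = j.val) (β : Fin n →₀ ℕ) :
    Good i (β + Finsupp.single j 1 + Finsupp.single j 1)
      ↔ Good i (β + Finsupp.single j 1 + Finsupp.single j' 1) := by
  classical
  have hj'j : j' < j := by rw [Fin.lt_def]; omega
  constructor
  · rintro ⟨h1, h2, h3⟩
    have hji : j ≤ i := by
      by_contra hc
      have h0 := h1 j (lt_of_not_ge hc)
      simp [Finsupp.add_apply, Finsupp.single_apply] at h0
      all_goals omega
    refine ⟨?_, ?_, ?_⟩
    · intro k hk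
      have hkj : j ≠ k := fun h => absurd hk (by rw [← h]; exact not_lt.mpr hji)
      have hkj' : j' ≠ k := fun h => absurd hk (by rw [← h]; exact not_lt.mpr (le_trans hj'j.le hji))
      have h0 := h1 k hk
      simp only [Finsupp.add_apply, Finsupp.single_apply, if_neg hkj, if_neg hkj'] at h0 ⊢
      omega
    · rw [sum_apply_single, sum_apply_single]
      rw [sum_apply_single, sum_apply_single] at h2
      simp only [Finset.mem_univ, if_pos] at h2 ⊢
      omega
    · intro t ht
      have h3t := h3 t ht
      rw [sum_apply_single, sum_apply_single] at h3t ⊢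
      by_cases hjt : j ∈ Finset.Iic t
      · have hj't : j' ∈ Finset.Iic t :=
          Finset.mem_Iic.mpr (le_trans hj'j.le (Finset.mem_Iic.mp hjt))
        simp only [if_pos hjt, if_pos hj't] at h3t ⊢
        omega
      · by_cases hj't : j' ∈ Finset.Iic t
        · simp only [if_pos hj't, if_neg hjt] at h3t ⊢
          have htj : t ≤ j := by
            rw [Fin.le_def]
            have h5 := Finset.mem_Iic.mp hj't
            rw [Fin.le_def] at h5
            have h4 : ¬ j ≤ t := fun h => hjt (Finset.mem_Iic.mpr h)
            rw [Fin.le_def] at h4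
            omega
          have hmono : ∑ k ∈ Finset.Iic t, β k ≤ ∑ k ∈ Finset.Iic j, β k :=
            Finset.sum_le_sum_of_subset (Finset.Iic_subset_Iic.mpr htj)
          have h3j := h3 j hji
          rw [sum_apply_single, sum_apply_single] at h3j
          simp only [Finset.mem_Iic, le_refl, if_pos] at h3j
          have h4 : ¬ j ≤ t := fun h => hjt (Finset.mem_Iic.mpr h)
          rw [Fin.le_def] at h4
          have h5 := Finset.mem_Iic.mp hj't
          rw [Fin.le_def] at h5
          omega
        · simp only [if_neg hjt, if_neg hj't] at h3t ⊢
          omega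
  · rintro ⟨h1, h2, h3⟩
    have hji : j ≤ i := by
      by_contra hc
      have h0 := h1 j (lt_of_not_ge hc)
      simp [Finsupp.add_apply, Finsupp.single_apply, ne_of_lt hj'j] at h0
      all_goals omega
    refine ⟨?_, ?_, ?_⟩
    · intro k hk
      have hkj : j ≠ k := fun h => absurd hk (by rw [← h]; exact not_lt.mpr hji)
      have hkj' : j' ≠ k := fun h => absurd hk (by rw [← h]; exact not_lt.mpr (le_trans hj'j.le hji))
      have h0 := h1 k hk
      simp only [Finsupp.add_apply, Finsupp.single_apply, if_neg hkj, if_neg hkj'] at h0 ⊢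
      omega
    · rw [sum_apply_single, sum_apply_single]
      rw [sum_apply_single, sum_apply_single] at h2
      simp only [Finset.mem_univ, if_pos] at h2 ⊢
      omega
    · intro t ht
      have h3t := h3 t ht
      rw [sum_apply_single, sum_apply_single] at h3t ⊢
      by_cases hjt : j ∈ Finset.Iic t
      · have hj't : j' ∈ Finset.Iic t :=
          Finset.mem_Iic.mpr (le_trans hj'j.le (Finset.mem_Iic.mp hjt))
        simp only [if_pos hjt, if_pos hj't] at h3t ⊢
        omega
      · simp only [if_neg hjt] at h3t ⊢
        split at h3t <;> omega

lemma good_single (i : Fin n) (h0 : i.val = 0) : Good i (Finsupp.single i 1) := by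
  refine ⟨?_, ?_, ?_⟩
  · intro k hk
    rw [Finsupp.single_apply, if_neg (ne_of_lt hk)]
  · rw [sum_single_apply, if_pos (Finset.mem_univ i), h0]
  · intro j hj
    rw [sum_single_apply]
    split <;> omega

lemma good_pow (i i' : Fin n) (hii : i'.val + 1 = i.val) (k : ℕ) (hk : k ≤ i.val + 1) :
    Good i (Finsupp.single i k + Finsupp.single i' (i.val + 1 - k)) ↔ 1 ≤ k := by
  have hi'i : i' < i := by rw [Fin.lt_def]; omega
  constructor
  · rintro ⟨h1, h2, h3⟩
    by_contra hc
    have hk0 : k = 0 := by omega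
    have h3' := h3 i' (le_of_lt hi'i)
    simp only [Finsupp.add_apply] at h3'
    rw [Finset.sum_add_distrib, sum_single_apply, sum_single_apply,
      if_neg (fun h => absurd (Finset.mem_Iic.mp h) (not_le.mpr hi'i)),
      if_pos (Finset.mem_Iic.mpr le_rfl)] at h3'
    omega
  · intro hk1
    refine ⟨?_, ?_, ?_⟩
    · intro k' hk'
      rw [Finsupp.add_apply, Finsupp.single_apply, Finsupp.single_apply,
        if_neg (ne_of_lt hk'), if_neg (ne_of_lt (lt_trans hi'i hk'))]
      rfl
    · simp only [Finsupp.add_apply]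
      rw [Finset.sum_add_distrib, sum_single_apply, sum_single_apply,
        if_pos (Finset.mem_univ _), if_pos (Finset.mem_univ _)]
      omega
    · intro t ht
      simp only [Finsupp.add_apply]
      rw [Finset.sum_add_distrib, sum_single_apply, sum_single_apply]
      by_cases hit : i ∈ Finset.Iic t
      · have h4 : i ≤ t := Finset.mem_Iic.mp hit
        have hi't : i' ∈ Finset.Iic t := Finset.mem_Iic.mpr (le_trans hi'i.le h4)
        rw [Fin.le_def] at h4
        rw [if_pos hit, if_pos hi't]
        omega
      · rw [if_neg hit]
        by_cases hi't : i' ∈ Finset.Iic t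
        · have h5 : i'.val ≤ t.val := Fin.le_def.mp (Finset.mem_Iic.mp hi't)
          rw [if_pos hi't]
          omega
        · rw [if_neg hi't]; omega

/-! #### `L` kills the image of the ideal under `psi` -/

lemma L_mul_gen (i j : Fin n) (q : MvPolynomial (Fin n) (ZMod 2)) :
    L i (q * (X j * (X j + prev j))) = 0 := by
  induction q using MvPolynomial.induction_on' with
  | add p q hp hq => rw [add_mul, map_add, hp, hq, add_zero]
  | monomial β c =>
    by_cases hj : 0 < j.val
    · set j' : Fin n := ⟨j.val - 1, Nat.lt_of_le_of_lt (Nat.sub_le _ _) j.isLt⟩ with hj'def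
      have hprev : prev j = X j' := by rw [prev, if_pos hj]
      have hjj' : j'.val + 1 = j.val := by simp [hj'def]; omega
      have hexp : monomial β c * (X j * (X j + X j'))
          = monomial (β + Finsupp.single j 1 + Finsupp.single j 1) c
            + monomial (β + Finsupp.single j 1 + Finsupp.single j' 1) c := by
        rw [hX j, hX j']
        simp only [mul_add, monomial_mul, mul_one, ← add_assoc]
      rw [hprev, hexp, map_add, L_monomial, L_monomial]
      by_cases hg : Good i (β + Finsupp.single j 1 + Finsupp.single j 1)
      · rw [if_pos hg, if_pos ((good_succ_iff i j j' hjj' β).mp hg)]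
        exact addSelf c
      · rw [if_neg hg, if_neg (fun h => hg ((good_succ_iff i j j' hjj' β).mpr h)), add_zero]
    · have hprev : prev j = 0 := by rw [prev, if_neg hj]
      have hexp : monomial β c * (X j * (X j + 0))
          = monomial (β + Finsupp.single j 1 + Finsupp.single j 1) c := by
        rw [add_zero, hX j]
        simp only [monomial_mul, mul_one, ← add_assoc]
      rw [hprev, hexp, L_monomial, if_neg (not_good_base i j (by omega) β)]

lemma L_psi_zero (i : Fin n) {p : MvPolynomial (Fin n) (ZMod 2)} (hp : p ∈ uIdeal n) :
    L i (psi p) = 0 := by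
  have H : ∀ q, L i (q * psi p) = 0 := by
    refine Submodule.span_induction
      (p := fun x _ => ∀ q, L i (q * psi x) = 0) ?_ ?_ ?_ ?_ (by rw [uIdeal] at hp; exact hp)
    · rintro x ⟨j, rfl⟩ q
      rw [psi_gen]
      exact L_mul_gen i j q
    · intro q; rw [map_zero, mul_zero, map_zero]
    · intro x y hx hy hqx hqy q
      rw [map_add, mul_add, map_add, hqx, hqy, add_zero]
    · intro a x hx hax q
      have hmul : psi (a * x) = psi a * psi x := map_mul _ _ _
      rw [smul_eq_mul, hmul, ← mul_assoc]
      exact hax (q * psi a)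
  simpa using H 1

/-! #### `L` does not kill `psi (uᵢ^(i+1))` -/

lemma L_psi_pow (i : Fin n) : L i (psi (X i ^ (i.val + 1))) = 1 := by
  have hpsiX : psi (X i ^ (i.val + 1)) = (X i + prev i) ^ (i.val + 1) := by
    rw [map_pow, psi_X]
  rw [hpsiX]
  rcases Nat.eq_zero_or_pos i.val with h0 | hpos
  · rw [prev, if_neg (by omega), add_zero, h0, pow_one, hX, L_monomial,
      if_pos (good_single i h0)]
  · set i' : Fin n := ⟨i.val - 1, Nat.lt_of_le_of_lt (Nat.sub_le _ _) i.isLt⟩ with hi'def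
    have hprev : prev i = X i' := by rw [prev, if_pos hpos]
    have hii : i'.val + 1 = i.val := by simp [hi'def]; omega
    rw [hprev, add_pow, map_sum]
    have hterm : ∀ k ∈ Finset.range (i.val + 1 + 1),
        L i (X i ^ k * X i' ^ (i.val + 1 - k)
            * ((i.val + 1).choose k : MvPolynomial (Fin n) (ZMod 2)))
          = if 1 ≤ k then (((i.val + 1).choose k : ℕ) : ZMod 2) else 0 := by
      intro k hk
      have hkle : k ≤ i.val + 1 := by
        have := Finset.mem_range.mp hk; omega
      have hcast : (((i.val + 1).choose k : ℕ) : MvPolynomial (Fin n) (ZMod 2))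
          = C (((i.val + 1).choose k : ℕ) : ZMod 2) :=
        (map_natCast (C : ZMod 2 →+* MvPolynomial (Fin n) (ZMod 2)) _).symm
      rw [X_pow_eq_monomial, X_pow_eq_monomial, monomial_mul, mul_one, hcast,
        mul_comm _ (C (((i.val + 1).choose k : ℕ) : ZMod 2)), C_mul_monomial, mul_one,
        L_monomial]
      by_cases h1k : 1 ≤ k
      · rw [if_pos ((good_pow i i' hii k hkle).mpr h1k), if_pos h1k]
      · rw [if_neg (fun h => h1k ((good_pow i i' hii k hkle).mp h)), if_neg h1k]
    rw [Finset.sum_congr rfl hterm]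
    rw [Finset.sum_range_succ']
    rw [if_neg (by omega), add_zero]
    have hf : ∀ k ∈ Finset.range (i.val + 1),
        (if 1 ≤ k + 1 then (((i.val + 1).choose (k + 1) : ℕ) : ZMod 2) else 0)
          = (((i.val + 1).choose (k + 1) : ℕ) : ZMod 2) :=
      fun k _ => if_pos (Nat.succ_le_succ (Nat.zero_le k))
    rw [Finset.sum_congr rfl hf]
    have hT : ∑ k ∈ Finset.range (i.val + 1 + 1), (((i.val + 1).choose k : ℕ) : ZMod 2)
        = 0 := by
      rw [← Nat.cast_sum, Nat.sum_range_choose, Nat.cast_pow,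
        show ((2 : ℕ) : ZMod 2) = 0 from rfl, zero_pow (by omega)]
    rw [Finset.sum_range_succ' (fun k => (((i.val + 1).choose k : ℕ) : ZMod 2))] at hT
    simp only [Nat.choose_zero_right, Nat.cast_one] at hT
    exact eq_of_add_eq_zero hT

end Stmt9Aux

/-- In `R = ℤ₂[u₁,…,uₙ]/F`, one has `uᵢ^i ≠ 0` and `uᵢ^{i+1} = 0`
for every `i = 1,…,n` (here `i : Fin n` represents `u_{i+1}`). -/
theorem stmt9 (n : ℕ) (i : Fin n) :
    Ideal.Quotient.mk (uIdeal n) (X i ^ (i.val + 1)) ≠ 0 ∧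
    Ideal.Quotient.mk (uIdeal n) (X i ^ (i.val + 2)) = 0 := by
  constructor
  · intro hzero
    have hmem : X i ^ (i.val + 1) ∈ uIdeal n := Ideal.Quotient.eq_zero_iff_mem.mp hzero
    have h := Stmt9Aux.L_psi_zero i hmem
    rw [Stmt9Aux.L_psi_pow i] at h
    exact one_ne_zero h
  · exact Stmt9Aux.vanish i
end

section
/- For natural numbers n ≥ 1 and 0 ≤ k ≤ n-1, let c(n,k) denote the number of monomials (counted with multiplicity over all choices) appearing in the degree-k component, after reduction by the relations t_1^2 = 0, t_j^2 = t_{j-1}t_j, of the product Π_{j=1}^{n-1}(1 + t_j + ⋯ + t_j^j) in Z_2[t_1,...,t_n]/G. Then the parities satisfy c(n+1, k) ≡ Σ_{i=0}^{k} c(n, i) (mod 2) for 1 ≤ k ≤ n-1. -/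
/-- `c n k`: the number of monomials, counted with multiplicity over all choices of one
term from each factor, in the degree-`k` component of
`∏_{j=1}^{n-1} (1 + tⱼ + ⋯ + tⱼ^j)`.  After reduction by the relations `t₁² = 0`,
`tⱼ² = tⱼ₋₁tⱼ`, each chosen term `∏ⱼ tⱼ^{sⱼ}` is a single monomial, so this count is
the number of tuples `(s₁,…,s_{n-1})` with `0 ≤ sⱼ ≤ j` and `∑ sⱼ = k`. -/
def c (n k : ℕ) : ℕ :=
  (Finset.univ.filter
    (fun s : (j : Fin (n - 1)) → Fin (j.val + 2) => ∑ j, (s j).val = k)).card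

lemma key (m k : ℕ) (hk : k ≤ m + 1) :
    c (m + 2) k = ∑ i ∈ Finset.range (k + 1), c (m + 1) i := by
  classical
  show (Finset.univ.filter
      (fun s : (j : Fin (m + 1)) → Fin (j.val + 2) => ∑ j, (s j).val = k)).card = _
  rw [Finset.card_eq_sum_card_fiberwise
      (f := fun s : (j : Fin (m + 1)) → Fin (j.val + 2) => ∑ j : Fin m, (s j.castSucc).val)
      (t := Finset.range (k + 1)) ?_]
  · refine Finset.sum_congr rfl (fun i hi => ?_)
    simp only [Finset.mem_range, Nat.lt_succ_iff] at hi
    show _ = (Finset.univ.filter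
        (fun t : (j : Fin m) → Fin (j.val + 2) => ∑ j, (t j).val = i)).card
    refine Finset.card_nbij' (fun s => Fin.init s)
      (fun t => Fin.snoc (α := fun j : Fin (m + 1) => Fin (j.val + 2)) t ⟨k - i, by rw [Fin.val_last]; omega⟩)
      ?_ ?_ ?_ ?_
    · intro s hs
      simp only [Finset.mem_coe, Finset.mem_filter, Finset.mem_univ, true_and] at hs ⊢
      exact hs.2
    · intro t ht
      simp only [Finset.mem_coe, Finset.mem_filter, Finset.mem_univ, true_and] at ht ⊢
      constructor
      · rw [Fin.sum_univ_castSucc]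
        simp only [Fin.snoc_castSucc, Fin.snoc_last]
        omega
      · simp only [Fin.snoc_castSucc]
        exact ht
    · intro s hs
      simp only [Finset.mem_coe, Finset.mem_filter, Finset.mem_univ, true_and] at hs
      have hlast : (s (Fin.last m)).val = k - i := by
        have := Fin.sum_univ_castSucc (n := m) (f := fun j => (s j).val)
        omega
      have : (⟨k - i, by omega⟩ : Fin (m + 2)) = s (Fin.last m) := by
        exact Fin.ext hlast.symm
      rw [this]
      exact Fin.snoc_init_self s
    · intro t ht
      exact Fin.init_snoc _ _
  · intro s hs
    simp only [Finset.mem_coe, Finset.mem_filter, Finset.mem_univ, true_and] at hs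
    simp only [Finset.mem_coe, Finset.mem_range, Nat.lt_succ_iff]
    have := Fin.sum_univ_castSucc (n := m) (f := fun j => (s j).val)
    omega

/-- the parities satisfy `c (n+1) k ≡ ∑_{i=0}^k c n i (mod 2)`
for `1 ≤ k ≤ n - 1`. -/
theorem stmt15 (n k : ℕ) (hn : 1 ≤ n) (hk1 : 1 ≤ k) (hk : k ≤ n - 1) :
    c (n + 1) k ≡ ∑ i ∈ Finset.range (k + 1), c n i [MOD 2] := by
  obtain ⟨m, rfl⟩ : ∃ m, n = m + 1 := ⟨n - 1, by omega⟩
  have h := key m k (by omega)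
  rw [show m + 1 + 1 = m + 2 from rfl, h]
end
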